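/- (Channel incompatibility is undetectable on image states) Let X and B be nonempty finite types, ω a quantum state on X × B with partial trace over X equal to (1 / (Fintype.card B : ℂ)) • (1 : Matrix B B ℂ), Ω a quantum channel from B to X whose Choi matrix equals ω, and σ a quantum state on B. Define W₁ on X × B by W₁ ρ := (Ω (tr over the first factor of ρ)) ⊗ σ, and W₂ on B × X by W₂ ρ := σ ⊗ (Ω (tr over the second factor of ρ)). Then for every pair of quantum states η₁ on X × B and η₂ on B × X such that the partial trace of η₁ over its first factor equals the partial trace of η₂ over its second factor, the image states are compatible: there exists a quantum state τ on X × B × X whose partial trace over the third factor equals W₁ η₁ and whose partial trace over the first factor equals W₂ η₂. -/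

import Mathlib

open Matrix Kronecker
open scoped ComplexOrder

noncomputable section

/-- A quantum state: positive semidefinite with unit trace. -/
def IsState {n : Type*} [Fintype n] (ρ : Matrix n n ℂ) : Prop :=
  ρ.PosSemidef ∧ ρ.trace = 1

/-- The Choi matrix of a linear map on matrices. -/
def choi {n m : Type*} [Fintype n] [DecidableEq n]
    (𝓔 : Matrix n n ℂ →ₗ[ℂ] Matrix m m ℂ) : Matrix (m × n) (m × n) ℂ :=
  Matrix.of fun p q =>
    (1 / (Fintype.card n : ℂ)) * 𝓔 (Matrix.single p.2 q.2 1) p.1 q.1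

/-- A quantum channel: trace preserving and completely positive. -/
def IsChannel {n m : Type*} [Fintype n] [DecidableEq n] [Fintype m]
    (𝓔 : Matrix n n ℂ →ₗ[ℂ] Matrix m m ℂ) : Prop :=
  (∀ ρ : Matrix n n ℂ, (𝓔 ρ).trace = ρ.trace) ∧ (choi 𝓔).PosSemidef

/-- Partial trace over the second (right) factor. -/
def trR {a b : Type*} [Fintype b] (M : Matrix (a × b) (a × b) ℂ) : Matrix a a ℂ :=
  Matrix.of fun i j => ∑ k, M (i, k) (j, k)

/-- Partial trace over the first (left) factor. -/
def trL {a b : Type*} [Fintype a] (M : Matrix (a × b) (a × b) ℂ) : Matrix b b ℂ :=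
  Matrix.of fun i j => ∑ k, M (k, i) (k, j)

/-- Partial trace over the third factor of a triple product. -/
def trC3 {a b c : Type*} [Fintype c] (M : Matrix (a × b × c) (a × b × c) ℂ) :
    Matrix (a × b) (a × b) ℂ :=
  Matrix.of fun i j => ∑ k, M (i.1, i.2, k) (j.1, j.2, k)

lemma kron_conjT {m n p q : Type*} (A : Matrix m n ℂ) (B : Matrix p q ℂ) :
    (A ⊗ₖ B)ᴴ = Aᴴ ⊗ₖ Bᴴ := by
  ext ⟨i, k⟩ ⟨j, l⟩
  simp [conjTranspose_apply, kroneckerMap_apply]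

open scoped MatrixOrder in
lemma psd_eq_conjTranspose_mul_self {m : Type*} [Fintype m] {A : Matrix m m ℂ}
    (hA : A.PosSemidef) : ∃ B : Matrix m m ℂ, A = Bᴴ * B := by
  classical
  obtain ⟨B, hB⟩ := CStarAlgebra.nonneg_iff_eq_star_mul_self.mp hA.nonneg
  exact ⟨B, hB⟩

lemma psd_kron {m p : Type*} [Fintype m] [Fintype p] {A : Matrix m m ℂ} {C : Matrix p p ℂ}
    (hA : A.PosSemidef) (hC : C.PosSemidef) : (A ⊗ₖ C).PosSemidef := by
  obtain ⟨D, hD⟩ := psd_eq_conjTranspose_mul_self hA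
  obtain ⟨E, hE⟩ := psd_eq_conjTranspose_mul_self hC
  rw [hD, hE, Matrix.mul_kronecker_mul, ← kron_conjT]
  exact Matrix.posSemidef_conjTranspose_mul_self _

lemma trL_psd {a b : Type*} [Fintype a] [Fintype b] {M : Matrix (a × b) (a × b) ℂ}
    (hM : M.PosSemidef) : (trL M).PosSemidef := by
  obtain ⟨C, hC⟩ := psd_eq_conjTranspose_mul_self hM
  have : trL M = (Matrix.of fun (pk : (a × b) × a) (i : b) => C pk.1 (pk.2, i))ᴴ *
      (Matrix.of fun (pk : (a × b) × a) (i : b) => C pk.1 (pk.2, i)) := by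
    ext i j
    simp only [trL, hC, Matrix.mul_apply, Matrix.conjTranspose_apply, Matrix.of_apply,
      Fintype.sum_prod_type]
    rw [Finset.sum_comm]
    exact Finset.sum_congr rfl fun p1 _ => Finset.sum_comm
  rw [this]
  exact Matrix.posSemidef_conjTranspose_mul_self _

lemma trace_trL {a b : Type*} [Fintype a] [Fintype b] (M : Matrix (a × b) (a × b) ℂ) :
    (trL M).trace = M.trace := by
  simp only [trL, Matrix.trace, Matrix.diag, Matrix.of_apply, Fintype.sum_prod_type]
  rw [Finset.sum_comm]

lemma trace_trR {a b : Type*} [Fintype a] [Fintype b] (M : Matrix (a × b) (a × b) ℂ) :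
    (trR M).trace = M.trace := by
  simp only [trR, Matrix.trace, Matrix.diag, Matrix.of_apply, Fintype.sum_prod_type]

lemma channel_entry {n m : Type*} [Fintype n] [DecidableEq n] [Nonempty n] [Fintype m]
    (Ω : Matrix n n ℂ →ₗ[ℂ] Matrix m m ℂ) (ρ : Matrix n n ℂ) (i j : m) :
    Ω ρ i j = (Fintype.card n : ℂ) * ∑ k, ∑ l, choi Ω (i, k) (j, l) * ρ k l := by
  have hcard : (Fintype.card n : ℂ) ≠ 0 := by
    exact_mod_cast Nat.cast_ne_zero.mpr Fintype.card_ne_zero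
  conv_lhs => rw [Matrix.matrix_eq_sum_single ρ]
  simp only [map_sum, Matrix.sum_apply, choi, Matrix.of_apply]
  rw [Finset.mul_sum]
  refine Finset.sum_congr rfl fun k _ => ?_
  rw [Finset.mul_sum]
  refine Finset.sum_congr rfl fun l _ => ?_
  have : Matrix.single k l (ρ k l) = ρ k l • Matrix.single k l 1 := by
    rw [Matrix.smul_single, smul_eq_mul, mul_one]
  rw [this, _root_.map_smul, Matrix.smul_apply, smul_eq_mul]
  field_simp

lemma channel_psd {n m : Type*} [Fintype n] [DecidableEq n] [Nonempty n] [Fintype m]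
    (Ω : Matrix n n ℂ →ₗ[ℂ] Matrix m m ℂ) (hΩ : (choi Ω).PosSemidef)
    {ρ : Matrix n n ℂ} (hρ : ρ.PosSemidef) : (Ω ρ).PosSemidef := by
  obtain ⟨C, hC⟩ := psd_eq_conjTranspose_mul_self hρ
  obtain ⟨D, hD⟩ := psd_eq_conjTranspose_mul_self hΩ
  set c : ℂ := (Real.sqrt (Fintype.card n) : ℂ) with hc
  have hcc : star c * c = (Fintype.card n : ℂ) := by
    rw [hc, Complex.star_def, Complex.conj_ofReal, ← Complex.ofReal_mul,
      Real.mul_self_sqrt (Nat.cast_nonneg _)]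
    simp
  set F : Matrix ((m × n) × n) m ℂ :=
    Matrix.of fun pr j => c * ∑ l, D pr.1 (j, l) * C pr.2 l with hF
  have key : Ω ρ = Fᴴ * F := by
    ext i j
    rw [channel_entry]
    simp only [hD, hC, Matrix.mul_apply, Matrix.conjTranspose_apply, hF, Matrix.of_apply,
      Fintype.sum_prod_type, star_mul', star_sum, map_sum]
    simp only [Finset.sum_mul, Finset.mul_sum]
    conv_lhs => enter [2, a0,2, a1,2, a2]; rw [Finset.sum_comm]
    conv_lhs => enter [2, a0,2, a1]; rw [Finset.sum_comm]
    conv_lhs => enter [2, a0]; rw [Finset.sum_comm]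
    conv_lhs => rw [Finset.sum_comm]
    conv_lhs => enter [2, a0,2, a1,2, a2]; rw [Finset.sum_comm]
    conv_lhs => enter [2, a0,2, a1]; rw [Finset.sum_comm]
    conv_lhs => enter [2, a0]; rw [Finset.sum_comm]
    conv_lhs => enter [2, a0,2, a1,2, a2]; rw [Finset.sum_comm]
    conv_lhs => enter [2, a0,2, a1]; rw [Finset.sum_comm]
    conv_lhs => enter [2, a0,2, a1,2, a2]; rw [Finset.sum_comm]
    conv_lhs => rw [Finset.sum_comm]
    refine Finset.sum_congr rfl fun p1 _ => ?_
    refine Finset.sum_congr rfl fun p2 _ => ?_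
    refine Finset.sum_congr rfl fun r _ => ?_
    refine Finset.sum_congr rfl fun l _ => ?_
    refine Finset.sum_congr rfl fun k _ => ?_
    rw [← hcc]
    ring
  rw [key]
  exact Matrix.posSemidef_conjTranspose_mul_self _

/-- Channel incompatibility of the pair `W₁, W₂` is undetectable on image states: for
every pair of locally compatible input states, the corresponding output states admit a
common tripartite extension. -/
theorem image_states_always_compatible
    {X B : Type*} [Fintype X] [DecidableEq X] [Nonempty X]
    [Fintype B] [DecidableEq B] [Nonempty B]
    (ω : Matrix (X × B) (X × B) ℂ) (hω : IsState ω)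
    (hωmarg : trL ω = (1 / (Fintype.card B : ℂ)) • (1 : Matrix B B ℂ))
    (Ω : Matrix B B ℂ →ₗ[ℂ] Matrix X X ℂ) (hΩ : IsChannel Ω) (hΩchoi : choi Ω = ω)
    (σ : Matrix B B ℂ) (hσ : IsState σ)
    (W₁ : Matrix (X × B) (X × B) ℂ →ₗ[ℂ] Matrix (X × B) (X × B) ℂ)
    (hW₁ : ∀ ρ : Matrix (X × B) (X × B) ℂ, W₁ ρ = Ω (trL ρ) ⊗ₖ σ)
    (W₂ : Matrix (B × X) (B × X) ℂ →ₗ[ℂ] Matrix (B × X) (B × X) ℂ)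
    (hW₂ : ∀ ρ : Matrix (B × X) (B × X) ℂ, W₂ ρ = σ ⊗ₖ Ω (trR ρ)) :
    ∀ (η₁ : Matrix (X × B) (X × B) ℂ) (η₂ : Matrix (B × X) (B × X) ℂ),
      IsState η₁ → IsState η₂ → trL η₁ = trR η₂ →
      ∃ τ : Matrix (X × B × X) (X × B × X) ℂ, IsState τ ∧
        trC3 τ = W₁ η₁ ∧ trL τ = W₂ η₂ := by
  intro η₁ η₂ h₁ h₂ hmarg
  set μ : Matrix X X ℂ := Ω (trL η₁) with hμ
  have hμpsd : μ.PosSemidef := channel_psd Ω hΩ.2 (trL_psd h₁.1)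
  have hμtr : μ.trace = 1 := by rw [hμ, hΩ.1, trace_trL, h₁.2]
  have hdiag : ∑ k, μ k k = 1 := by simpa [Matrix.trace, Matrix.diag] using hμtr
  refine ⟨μ ⊗ₖ (σ ⊗ₖ μ), ⟨psd_kron hμpsd (psd_kron hσ.1 hμpsd), ?_⟩, ?_, ?_⟩
  · rw [Matrix.trace_kronecker, Matrix.trace_kronecker, hμtr, hσ.2, one_mul, one_mul]
  · rw [hW₁ η₁, ← hμ]
    ext ⟨i1, i2⟩ ⟨j1, j2⟩
    show ∑ k, (μ ⊗ₖ (σ ⊗ₖ μ)) (i1, (i2, k)) (j1, (j2, k)) = μ i1 j1 * σ i2 j2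
    simp only [Matrix.kroneckerMap_apply]
    rw [← Finset.mul_sum, ← Finset.mul_sum, hdiag, mul_one]
  · rw [hW₂ η₂, ← hmarg, ← hμ]
    ext i j
    show ∑ k, (μ ⊗ₖ (σ ⊗ₖ μ)) (k, i) (k, j) = σ i.1 j.1 * μ i.2 j.2
    simp only [Matrix.kroneckerMap_apply]
    rw [← Finset.sum_mul, hdiag, one_mul]
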